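/- lim_{j→∞} 2^{j(2β−1)} (f_{G⋆ψ_j})^{⋆2}(0) = C_G(0)² ∫_ℝ |ψ̂(η)|⁴ |η|^{2β−2} dη, where (f_{G⋆ψ_j})^{⋆2}(0) = ∫_ℝ f_{G⋆ψ_j}(λ) f_{G⋆ψ_j}(−λ) dλ, and the limiting integral on the right-hand side is finite. -/

import Mathlib

open MeasureTheory Filter

/-- Fourier transform `ψ̂(λ) = ∫ e^{-iλt} ψ(t) dt`. -/
noncomputable def fhat (ψ : ℝ → ℝ) (l : ℝ) : ℂ :=
  ∫ t : ℝ, Complex.exp (-(Complex.I * (l : ℂ) * (t : ℂ))) * (ψ t : ℂ)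

private lemma aux_integrable_exp_abs_rpow {b s : ℝ} (hb : 0 < b) (hs : (-1:ℝ) < s) :
    Integrable (fun y : ℝ => Real.exp (-b * |y|) * |y| ^ s) := by
  set g : ℝ → ℝ := fun y => Real.exp (-b * |y|) * |y| ^ s with hg
  have h1 : IntegrableOn g (Set.Ioi (0:ℝ)) := by
    have h0 : IntegrableOn (fun x : ℝ => x ^ s * Real.exp (-b * x ^ (1:ℝ))) (Set.Ioi 0) :=
      integrableOn_rpow_mul_exp_neg_mul_rpow hs one_pos hb
    refine h0.congr_fun (fun x hx => ?_) measurableSet_Ioi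
    have hx0 : (0:ℝ) < x := hx
    show x ^ s * Real.exp (-b * x ^ (1:ℝ)) = Real.exp (-b * |x|) * |x| ^ s
    rw [abs_of_pos hx0, Real.rpow_one, mul_comm]
  have h2 : IntegrableOn g (Set.Iio (0:ℝ)) := by
    have h1' : Integrable ((Set.Ioi (0:ℝ)).indicator g) :=
      (integrable_indicator_iff measurableSet_Ioi).2 h1
    have h3 := h1'.comp_neg
    have heq : (fun x => (Set.Ioi (0:ℝ)).indicator g (-x)) = (Set.Iio (0:ℝ)).indicator g := by
      funext x
      by_cases hx : x < 0
      · rw [Set.indicator_of_mem (Set.mem_Ioi.2 (by linarith : (0:ℝ) < -x)),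
          Set.indicator_of_mem (Set.mem_Iio.2 hx)]
        show Real.exp (-b * |(-x)|) * |(-x)| ^ s = _
        rw [abs_neg]
      · rw [Set.indicator_of_notMem (by simpa using hx),
          Set.indicator_of_notMem (fun h => hx (Set.mem_Iio.1 h))]
    rw [heq] at h3
    exact (integrable_indicator_iff measurableSet_Iio).1 h3
  have h4 : IntegrableOn g (Set.Iio 0 ∪ Set.Ici 0) :=
    h2.union ((integrableOn_Ici_iff_integrableOn_Ioi (by simp)).2 h1)
  rwa [Set.Iio_union_Ici, integrableOn_univ] at h4

theorem stmt_11
    (β : ℝ) (hβ : β ∈ Set.Ioo (0 : ℝ) 1)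
    (C_G : ℝ → ℝ) (hCG_cont : Continuous C_G) (hCG_bdd : ∃ M : ℝ, ∀ x, C_G x ≤ M)
    (hCG_nonneg : ∀ x, 0 ≤ C_G x) (hCG_even : ∀ x, C_G (-x) = C_G x)
    (hCG0 : 0 < C_G 0)
    (f_G : ℝ → ℝ) (hfG_nonneg : ∀ x, 0 ≤ f_G x)
    (hfG : ∀ x : ℝ, x ≠ 0 → f_G x = C_G x * |x| ^ (β - 1))
    (hfG_int : Integrable f_G)
    (ψ : ℝ → ℝ) (hψ_int : Integrable ψ) (hψ_sq : Integrable (fun t => (ψ t) ^ 2))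
    (hψ_zero : (∫ t : ℝ, ψ t) = 0)
    (α K κ : ℝ) (hα : 1 ≤ α) (hK : 0 < K) (hκ : 0 < κ)
    (Cψ : ℝ → ℂ) (hCψ_cont : Continuous Cψ)
    (hCψ0 : 0 < (Cψ 0).re ∧ (Cψ 0).im = 0)
    (hCψ_bdd : ∀ l : ℝ, ‖Cψ l‖ ≤ K * Real.exp (-κ * |l|))
    (hhat : ∀ l : ℝ, fhat ψ l = Cψ l * ((|l| ^ α : ℝ) : ℂ))
    (fGp : ℕ → ℝ → ℝ)
    (hfGp : ∀ j : ℕ, ∀ l : ℝ,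
      fGp j l = f_G l * ‖fhat ψ ((2 : ℝ) ^ j * l)‖ ^ 2) :
    Integrable (fun η : ℝ => ‖fhat ψ η‖ ^ 4 * |η| ^ (2 * β - 2)) ∧
    Tendsto
      (fun j : ℕ => (2 : ℝ) ^ ((j : ℝ) * (2 * β - 1)) * ∫ l : ℝ, fGp j l * fGp j (-l))
      atTop
      (nhds ((C_G 0) ^ 2 * ∫ η : ℝ, ‖fhat ψ η‖ ^ 4 * |η| ^ (2 * β - 2))) := by
  obtain ⟨hβ0, hβ1⟩ := hβ
  obtain ⟨M, hM⟩ := hCG_bdd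
  have hM0 : 0 < M := lt_of_lt_of_le hCG0 (hM 0)
  have hα0 : (0:ℝ) < α := by linarith
  have hc_pos : ∀ j : ℕ, (0:ℝ) < (2:ℝ) ^ j := fun j => pow_pos two_pos j
  -- the modulus of fhat
  have habs : ∀ y : ℝ, ‖fhat ψ y‖ = ‖Cψ y‖ * |y| ^ α := by
    intro y
    rw [hhat, norm_mul, Complex.norm_real, Real.norm_eq_abs, abs_of_nonneg (Real.rpow_nonneg (abs_nonneg y) α)]
  have hA0 : ‖fhat ψ 0‖ = 0 := by
    rw [habs, abs_zero, Real.zero_rpow (ne_of_gt hα0), mul_zero]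
  have hAle : ∀ y : ℝ, ‖fhat ψ y‖ ≤ K * Real.exp (-κ * |y|) * |y| ^ α := by
    intro y
    rw [habs]
    exact mul_le_mul_of_nonneg_right (hCψ_bdd y) (Real.rpow_nonneg (abs_nonneg y) α)
  have hs_pos : (0:ℝ) < 4 * α + (2 * β - 2) := by linarith
  set D : ℝ → ℝ := fun y => K ^ 4 * (Real.exp (-(4 * κ) * |y|) * |y| ^ (4 * α + (2 * β - 2)))
    with hD_def
  have hD_int : Integrable D :=
    (aux_integrable_exp_abs_rpow (by linarith) (by linarith)).const_mul _
  -- pointwise bound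
  have hF_nonneg : ∀ y : ℝ, 0 ≤ ‖fhat ψ y‖ ^ 4 * |y| ^ (2 * β - 2) := fun y =>
    mul_nonneg (pow_nonneg (norm_nonneg _) 4) (Real.rpow_nonneg (abs_nonneg y) _)
  have hbound : ∀ y : ℝ, ‖fhat ψ y‖ ^ 4 * |y| ^ (2 * β - 2) ≤ D y := by
    intro y
    rcases eq_or_ne y 0 with rfl | hy
    · rw [hA0, hD_def]
      simp [Real.zero_rpow (show 2 * β - 2 ≠ 0 by intro h; nlinarith),
        Real.zero_rpow (ne_of_gt hs_pos)]
    · have h1 : ‖fhat ψ y‖ ^ 4 ≤ (K * Real.exp (-κ * |y|) * |y| ^ α) ^ 4 :=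
        pow_le_pow_left₀ (norm_nonneg _) (hAle y) 4
      have h2 := mul_le_mul_of_nonneg_right h1 (Real.rpow_nonneg (abs_nonneg y) (2 * β - 2))
      refine h2.trans_eq ?_
      have hy' : (0:ℝ) < |y| := abs_pos.2 hy
      rw [hD_def, mul_pow, mul_pow, ← Real.rpow_natCast (|y| ^ α) 4,
        ← Real.rpow_mul (abs_nonneg y), ← Real.exp_nat_mul]
      have e1 : ((4:ℕ) : ℝ) * (-κ * |y|) = -(4 * κ) * |y| := by push_cast; ring
      have e2 : α * ((4:ℕ):ℝ) = 4 * α := by push_cast; ring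
      rw [e1, e2, mul_assoc, mul_assoc, ← Real.rpow_add hy']
  -- continuity / measurability
  have hcontA : Continuous (fun y : ℝ => ‖fhat ψ y‖) := by
    have h : (fun y : ℝ => ‖fhat ψ y‖) = fun y => ‖Cψ y‖ * |y| ^ α :=
      funext habs
    rw [h]
    exact (continuous_norm.comp hCψ_cont).mul
      (continuous_abs.rpow_const (fun _ => Or.inr hα0.le))
  have hmeas_rpow : Measurable (fun η : ℝ => |η| ^ (2 * β - 2)) := by measurability
  have hmeasF : Measurable (fun η : ℝ => ‖fhat ψ η‖ ^ 4 * |η| ^ (2 * β - 2)) :=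
    ((hcontA.pow 4).measurable).mul hmeas_rpow
  have hFint : Integrable (fun η : ℝ => ‖fhat ψ η‖ ^ 4 * |η| ^ (2 * β - 2)) := by
    refine hD_int.mono' hmeasF.aestronglyMeasurable (Filter.Eventually.of_forall fun y => ?_)
    rw [Real.norm_eq_abs, abs_of_nonneg (hF_nonneg y)]
    exact hbound y
  refine ⟨hFint, ?_⟩
  -- evenness of |fhat|
  have hconj : ∀ x : ℝ, fhat ψ (-x) = (starRingEnd ℂ) (fhat ψ x) := by
    intro x
    unfold fhat
    rw [← integral_conj]
    congr 1
    funext t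
    rw [map_mul, ← Complex.exp_conj, Complex.conj_ofReal]
    congr 1
    simp only [map_neg, map_mul, Complex.conj_I, Complex.conj_ofReal]
    push_cast
    ring
  have hAeven : ∀ x : ℝ, ‖fhat ψ (-x)‖ = ‖fhat ψ x‖ := by
    intro x; rw [hconj, Complex.norm_conj]
  -- the rescaled integrand
  set Φ : ℕ → ℝ → ℝ := fun j y =>
    C_G (((2:ℝ) ^ j)⁻¹ * y) ^ 2 * (‖fhat ψ y‖ ^ 4 * |y| ^ (2 * β - 2)) with hΦ
  have hkey : ∀ (j : ℕ) (l : ℝ),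
      fGp j l * fGp j (-l) = ((2:ℝ) ^ j) ^ (2 - 2 * β) * Φ j ((2:ℝ) ^ j * l) := by
    intro j l
    rcases eq_or_ne l 0 with rfl | hl
    · rw [hfGp, hΦ]
      simp [hA0]
    · rw [hfGp, hfGp, hΦ]
      simp only
      rw [hfG l hl, hfG (-l) (neg_ne_zero.2 hl), hCG_even, abs_neg, mul_neg, hAeven,
        inv_mul_cancel_left₀ (hc_pos j).ne', abs_mul,
        abs_of_pos (hc_pos j), Real.mul_rpow (hc_pos j).le (abs_nonneg l)]
      have e1 : |l| ^ (2 * β - 2) = |l| ^ (β - 1) * |l| ^ (β - 1) := by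
        rw [← Real.rpow_add (abs_pos.2 hl)]
        ring_nf
      have e2 : ((2:ℝ) ^ j) ^ (2 - 2 * β) * ((2:ℝ) ^ j) ^ (2 * β - 2) = 1 := by
        rw [← Real.rpow_add (hc_pos j)]
        norm_num
      rw [e1]
      rw [show ((2:ℝ) ^ j) ^ (2 - 2 * β) * (C_G l ^ 2 *
          (‖fhat ψ ((2:ℝ) ^ j * l)‖ ^ 4 *
            (((2:ℝ) ^ j) ^ (2 * β - 2) * (|l| ^ (β - 1) * |l| ^ (β - 1)))))
          = (((2:ℝ) ^ j) ^ (2 - 2 * β) * ((2:ℝ) ^ j) ^ (2 * β - 2)) *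
            (C_G l ^ 2 * (‖fhat ψ ((2:ℝ) ^ j * l)‖ ^ 4 *
              (|l| ^ (β - 1) * |l| ^ (β - 1)))) from by ring, e2, one_mul]
      ring
  -- integral identity
  have hint : ∀ j : ℕ, (2:ℝ) ^ ((j:ℝ) * (2 * β - 1)) * ∫ l : ℝ, fGp j l * fGp j (-l)
      = ∫ y : ℝ, Φ j y := by
    intro j
    have h1 : ∫ l : ℝ, fGp j l * fGp j (-l)
        = ((2:ℝ) ^ j) ^ (2 - 2 * β) * ∫ l : ℝ, Φ j ((2:ℝ) ^ j * l) := by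
      simp_rw [hkey j]
      rw [integral_const_mul]
    rw [h1, MeasureTheory.Measure.integral_comp_mul_left (Φ j) ((2:ℝ) ^ j),
      abs_inv, abs_of_pos (hc_pos j), smul_eq_mul]
    have e3 : (2:ℝ) ^ ((j:ℝ) * (2 * β - 1)) * (((2:ℝ) ^ j) ^ (2 - 2 * β) * ((2:ℝ) ^ j)⁻¹) = 1 := by
      have e4 : (2:ℝ) ^ ((j:ℝ) * (2 * β - 1)) = ((2:ℝ) ^ j) ^ (2 * β - 1) := by
        rw [← Real.rpow_natCast 2 j, ← Real.rpow_mul (by norm_num : (0:ℝ) ≤ 2)]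
      have e5 : ((2:ℝ) ^ j)⁻¹ = ((2:ℝ) ^ j) ^ (-1 : ℝ) := by
        rw [Real.rpow_neg_one]
      rw [e4, e5, ← Real.rpow_add (hc_pos j), ← Real.rpow_add (hc_pos j),
        show (2 * β - 1 + (2 - 2 * β + -1) : ℝ) = 0 from by ring, Real.rpow_zero]
    linear_combination (∫ y : ℝ, Φ j y) * e3
  -- dominated convergence
  have hΦ_nonneg : ∀ (j : ℕ) (y : ℝ), 0 ≤ Φ j y := fun j y =>
    mul_nonneg (sq_nonneg _) (hF_nonneg y)
  have hDCT : Tendsto (fun j : ℕ => ∫ y : ℝ, Φ j y) atTop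
      (nhds (∫ y : ℝ, C_G 0 ^ 2 * (‖fhat ψ y‖ ^ 4 * |y| ^ (2 * β - 2)))) := by
    refine tendsto_integral_of_dominated_convergence (fun y => M ^ 2 * D y)
      (fun j => ?_) (hD_int.const_mul _)
      (fun j => Filter.Eventually.of_forall fun y => ?_)
      (Filter.Eventually.of_forall fun y => ?_)
    · exact (((hCG_cont.comp (continuous_const.mul continuous_id)).pow 2).measurable.mul
        hmeasF).aestronglyMeasurable
    · rw [Real.norm_eq_abs, abs_of_nonneg (hΦ_nonneg j y)]
      have hCsq : C_G (((2:ℝ) ^ j)⁻¹ * y) ^ 2 ≤ M ^ 2 := by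
        have := hM (((2:ℝ) ^ j)⁻¹ * y)
        have := hCG_nonneg (((2:ℝ) ^ j)⁻¹ * y)
        nlinarith
      exact mul_le_mul hCsq (hbound y) (hF_nonneg y) (sq_nonneg M)
    · have h0 : Tendsto (fun j : ℕ => ((2:ℝ) ^ j)⁻¹ * y) atTop (nhds 0) := by
        have h0' : Tendsto (fun j : ℕ => ((2:ℝ)⁻¹) ^ j) atTop (nhds 0) :=
          tendsto_pow_atTop_nhds_zero_of_lt_one (by norm_num) (by norm_num)
      
        have h0'' : Tendsto (fun j : ℕ => ((2:ℝ)⁻¹) ^ j * y) atTop (nhds (0 * y)) :=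
          h0'.mul_const y
        rw [zero_mul] at h0''
        refine h0''.congr fun j => ?_
        rw [inv_pow]
      have h1 : Tendsto (fun j : ℕ => C_G (((2:ℝ) ^ j)⁻¹ * y)) atTop (nhds (C_G 0)) :=
        (hCG_cont.tendsto 0).comp h0
      exact ((h1.pow 2).mul_const _)
  have hfun : (fun j : ℕ => (2:ℝ) ^ ((j:ℝ) * (2 * β - 1)) * ∫ l : ℝ, fGp j l * fGp j (-l))
      = fun j : ℕ => ∫ y : ℝ, Φ j y := funext hint
  rw [hfun, show (C_G 0) ^ 2 * ∫ η : ℝ, ‖fhat ψ η‖ ^ 4 * |η| ^ (2 * β - 2)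
      = ∫ y : ℝ, C_G 0 ^ 2 * (‖fhat ψ y‖ ^ 4 * |y| ^ (2 * β - 2)) from
    (integral_const_mul _ _).symm]
  exact hDCT
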